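/- Let Q be an r×r real matrix such that every row satisfies Q(i,:) e ≥ ‖Q(i,:)‖₂ and e^T Q e = r. Then |det(Q)| ≤ 1. -/

import Mathlib

open Matrix

/-- unweighted AM-GM corollary: nonneg reals with sum at most `r` have product at most 1. -/
lemma amgm_aux {r : ℕ} (hr : r ≠ 0) (z : Fin r → ℝ) (hz : ∀ i, 0 ≤ z i)
    (hs : ∑ i, z i ≤ (r : ℝ)) : ∏ i, z i ≤ 1 := by
  have hrpos : (0 : ℝ) < r := by positivity
  have h := Real.geom_mean_le_arith_mean (Finset.univ : Finset (Fin r)) (fun _ => 1) z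
    (fun _ _ => zero_le_one) (by simpa using hrpos) (fun i _ => hz i)
  simp only [Real.rpow_one, one_mul, Finset.sum_const, Finset.card_univ, Fintype.card_fin,
    nsmul_eq_mul, mul_one] at h
  have h1 : (∏ i, z i) ^ ((r : ℝ)⁻¹) ≤ 1 := by
    refine h.trans ?_
    rw [div_le_one hrpos]
    exact hs
  have hp : (0 : ℝ) ≤ ∏ i, z i := Finset.prod_nonneg fun i _ => hz i
  have := pow_le_one₀ (Real.rpow_nonneg hp _) h1 (n := r)
  rwa [← Real.rpow_natCast ((∏ i, z i) ^ ((r:ℝ)⁻¹)) r, ← Real.rpow_mul hp,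
    inv_mul_cancel₀ (by exact_mod_cast hrpos.ne'), Real.rpow_one] at this

lemma trace_eq_sum_eigenvalues_aux {m : Type*} [Fintype m] [DecidableEq m]
    {A : Matrix m m ℝ} (hA : A.IsHermitian) : A.trace = ∑ i, hA.eigenvalues i := by
  conv_lhs => rw [hA.spectral_theorem, Unitary.conjStarAlgAut_apply]
  rw [Matrix.trace_mul_cycle, Unitary.coe_star_mul_self, Matrix.one_mul,
    Matrix.trace_diagonal]
  simp

theorem stmt1 {r : ℕ} (Q : Matrix (Fin r) (Fin r) ℝ)
    (hrow : ∀ i, Real.sqrt (∑ j, (Q i j) ^ 2) ≤ ∑ j, Q i j)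
    (hsum : ∑ i, ∑ j, Q i j = (r : ℝ)) :
    |Q.det| ≤ 1 := by
  rcases Nat.eq_zero_or_pos r with hr | hr
  · subst hr
    simp [Matrix.det_isEmpty]
  have hr0 : r ≠ 0 := hr.ne'
  set n : Fin r → ℝ := fun i => Real.sqrt (∑ j, (Q i j) ^ 2) with hn
  by_cases hz : ∃ i, ∀ j, Q i j = 0
  · obtain ⟨i, hi⟩ := hz
    rw [Matrix.det_eq_zero_of_row_eq_zero i hi]
    simp
  push_neg at hz
  -- each row norm is positive
  have hnpos : ∀ i, 0 < n i := by
    intro i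
    obtain ⟨j, hj⟩ := hz i
    have : 0 < ∑ k, (Q i k) ^ 2 := by
      apply Finset.sum_pos' (fun k _ => sq_nonneg _)
      exact ⟨j, Finset.mem_univ j, by positivity⟩
    exact Real.sqrt_pos.mpr this
  have hnsq : ∀ i, n i ^ 2 = ∑ j, (Q i j) ^ 2 := fun i =>
    Real.sq_sqrt (Finset.sum_nonneg fun j _ => sq_nonneg _)
  -- normalized matrix
  set Q' : Matrix (Fin r) (Fin r) ℝ := Matrix.of (fun i j => Q i j / n i) with hQ'
  have hfact : Q = (Matrix.diagonal n) * Q' := by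
    ext i j
    simp [hQ', Matrix.diagonal_mul, mul_div_cancel₀ _ (hnpos i).ne']
  have hdet : Q.det = (∏ i, n i) * Q'.det := by
    rw [hfact, Matrix.det_mul, Matrix.det_diagonal]
  -- the Gram matrix of Q'
  have hM : (Q' * Q'ᴴ).PosSemidef := Matrix.posSemidef_self_mul_conjTranspose Q'
  have hHerm := hM.1
  have hMdet : (Q' * Q'ᴴ).det = Q'.det ^ 2 := by
    rw [Matrix.det_mul, Matrix.det_conjTranspose]
    simp [sq]
  have htrace : (Q' * Q'ᴴ).trace = (r : ℝ) := by
    have hdiag : ∀ i, (Q' * Q'ᴴ) i i = 1 := by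
      intro i
      simp only [Matrix.mul_apply, Matrix.conjTranspose_apply, hQ', Matrix.of_apply, star_trivial]
      have : ∑ j, Q i j / n i * (Q i j / n i) = (∑ j, (Q i j) ^ 2) / (n i ^ 2) := by
        rw [Finset.sum_div]
        congr 1; ext j; ring
      rw [this, ← hnsq i, div_self (pow_pos (hnpos i) 2).ne']
    simp only [Matrix.trace, Matrix.diag, hdiag, Finset.sum_const, Finset.card_univ,
      Fintype.card_fin, nsmul_eq_mul, mul_one]
  -- eigenvalue AM-GM
  have hdet_eig : (Q' * Q'ᴴ).det = ∏ i, hHerm.eigenvalues i := by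
    have := hHerm.det_eq_prod_eigenvalues
    simpa using this
  have hsum_eig : ∑ i, hHerm.eigenvalues i = (r : ℝ) := by
    rw [← trace_eq_sum_eigenvalues_aux hHerm, htrace]
  have hprod_le : ∏ i, hHerm.eigenvalues i ≤ 1 :=
    amgm_aux hr0 _ (fun i => hM.eigenvalues_nonneg i) (le_of_eq hsum_eig)
  have hQ'det : |Q'.det| ≤ 1 := by
    have h2 : Q'.det ^ 2 ≤ 1 := by rw [← hMdet, hdet_eig]; exact hprod_le
    nlinarith [abs_nonneg Q'.det, sq_abs Q'.det]
  -- combine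
  have hnprod : ∏ i, n i ≤ 1 := by
    refine le_trans (Finset.prod_le_prod (fun i _ => (hnpos i).le) (fun i _ => hrow i)) ?_
    exact amgm_aux hr0 _ (fun i => le_trans (hnpos i).le (hrow i)) (le_of_eq hsum)
  calc |Q.det| = (∏ i, n i) * |Q'.det| := by
        rw [hdet, abs_mul, abs_of_nonneg (Finset.prod_nonneg fun i _ => (hnpos i).le)]
    _ ≤ (∏ i, n i) * 1 := by
        exact mul_le_mul_of_nonneg_left hQ'det (Finset.prod_nonneg fun i _ => (hnpos i).le)
    _ ≤ 1 := by rw [mul_one]; exact hnprod
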